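/- Let P ∈ ℂ[X] be monic of degree d ≥ 3, and regard D_P(z,u) = d·P(z) + (u − z)·P′(z) and ∂_zD_P(z,u) = (d−1)·P′(z) + (u − z)·P″(z) as polynomials in z with coefficients in ℂ[u]; their degrees in z are d−1 and d−2, respectively. Let R(u) ∈ ℂ[u] be the resultant of D_P and ∂_zD_P with respect to z. Then R has degree at most 2d−3 in u, its coefficient of u^{2d−3} equals the resultant of P′ and P″, and hence this coefficient vanishes if and only if P′ has a multiple root. Consequently, the isodynamic polynomial ID_d(P), i.e. the discriminant of D_P(z,u) with respect to z, has degree less than 2d−4 in u if and only if the derivative P′ of P has a multiple zero. -/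

import Mathlib

open Polynomial Matrix

/-- The Sylvester matrix of two polynomials `f` and `g`, regarded as having
degrees (at most) `m` and `n` respectively: a square matrix of size `n + m`
whose first `n` rows contain the shifted coefficient sequences of `f` and
whose last `m` rows contain the shifted coefficient sequences of `g`. -/
noncomputable def sylvesterMatrix {R : Type*} [CommRing R] (m n : ℕ)
    (f g : Polynomial R) : Matrix (Fin (n + m)) (Fin (n + m)) R :=
  Matrix.of fun i j =>
    if (i : ℕ) < n then
      if (i : ℕ) ≤ (j : ℕ) ∧ (j : ℕ) ≤ (i : ℕ) + m then f.coeff (m + i - j) else 0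
    else
      if (i : ℕ) - n ≤ (j : ℕ) ∧ (j : ℕ) ≤ ((i : ℕ) - n) + n then
        g.coeff (n + ((i : ℕ) - n) - j)
      else 0

/-- The resultant of two polynomials `f` and `g` of degrees (at most) `m`
and `n`: the determinant of their Sylvester matrix. -/
noncomputable def resultant {R : Type*} [CommRing R] (m n : ℕ)
    (f g : Polynomial R) : R :=
  (sylvesterMatrix m n f g).det

noncomputable def vecPolyA (m n : ℕ) (v : Fin (n + m) → ℂ) : ℂ[X] :=
  ∑ i : Fin (n + m), if (i : ℕ) < n then C (v i) * X ^ (n - 1 - (i : ℕ)) else 0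

noncomputable def vecPolyB (m n : ℕ) (v : Fin (n + m) → ℂ) : ℂ[X] :=
  ∑ i : Fin (n + m), if n ≤ (i : ℕ) then C (v i) * X ^ (m - 1 - ((i : ℕ) - n)) else 0

lemma vecPolyA_natDegree_le (m n : ℕ) (v : Fin (n + m) → ℂ) :
    (vecPolyA m n v).natDegree ≤ n - 1 := by
  apply natDegree_sum_le_of_forall_le
  intro i _
  split_ifs with h
  · exact (natDegree_C_mul_le _ _).trans (by rw [natDegree_X_pow]; omega)
  · simp

lemma vecPolyB_natDegree_le (m n : ℕ) (v : Fin (n + m) → ℂ) :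
    (vecPolyB m n v).natDegree ≤ m - 1 := by
  apply natDegree_sum_le_of_forall_le
  intro i _
  split_ifs with h
  · exact (natDegree_C_mul_le _ _).trans (by rw [natDegree_X_pow]; omega)
  · simp

lemma vecPolyA_coeff (m n : ℕ) (v : Fin (n + m) → ℂ) (i : Fin (n + m)) (hi : (i : ℕ) < n) :
    (vecPolyA m n v).coeff (n - 1 - (i : ℕ)) = v i := by
  rw [vecPolyA, finset_sum_coeff]
  rw [Finset.sum_eq_single i]
  · rw [if_pos hi, coeff_C_mul, coeff_X_pow, if_pos rfl, mul_one]
  · intro b _ hb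
    split_ifs with h
    · rw [coeff_C_mul, coeff_X_pow, if_neg, mul_zero]
      intro hEq
      apply hb
      apply Fin.ext
      omega
    · simp
  · intro h; exact absurd (Finset.mem_univ i) h

lemma vecPolyB_coeff (m n : ℕ) (v : Fin (n + m) → ℂ) (i : Fin (n + m)) (hi : n ≤ (i : ℕ)) :
    (vecPolyB m n v).coeff (m - 1 - ((i : ℕ) - n)) = v i := by
  rw [vecPolyB, finset_sum_coeff]
  rw [Finset.sum_eq_single i]
  · rw [if_pos hi, coeff_C_mul, coeff_X_pow, if_pos rfl, mul_one]
  · intro b _ hb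
    split_ifs with h
    · rw [coeff_C_mul, coeff_X_pow, if_neg, mul_zero]
      intro hEq
      apply hb
      apply Fin.ext
      have hb2 := b.isLt
      have hi2 := i.isLt
      omega
    · simp
  · intro h; exact absurd (Finset.mem_univ i) h

lemma coeff_C_mul_X_pow_mul (a : ℂ) (s : ℕ) (f : ℂ[X]) (t : ℕ) :
    (C a * X ^ s * f).coeff t = a * (if s ≤ t then f.coeff (t - s) else 0) := by
  rw [mul_assoc, mul_comm (X ^ s), coeff_C_mul, coeff_mul_X_pow']

lemma vecMul_sylvester (m n : ℕ) (f g : ℂ[X]) (hf : f.natDegree ≤ m) (hg : g.natDegree ≤ n)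
    (v : Fin (n + m) → ℂ) (j : Fin (n + m)) :
    (v ᵥ* sylvesterMatrix m n f g) j
      = (vecPolyA m n v * f + vecPolyB m n v * g).coeff (m + n - 1 - (j : ℕ)) := by
  have hj := j.isLt
  rw [coeff_add, vecPolyA, vecPolyB, Finset.sum_mul, Finset.sum_mul,
    finset_sum_coeff, finset_sum_coeff, ← Finset.sum_add_distrib]
  rw [Matrix.vecMul, dotProduct]
  apply Finset.sum_congr rfl
  intro i _
  have hi := i.isLt
  set t := m + n - 1 - (j : ℕ) with ht
  rw [sylvesterMatrix]
  simp only [Matrix.of_apply]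
  by_cases h1 : (i : ℕ) < n
  · rw [if_pos h1, if_pos h1, if_neg (show ¬ n ≤ (i : ℕ) by omega), zero_mul,
      coeff_zero, add_zero, coeff_C_mul_X_pow_mul]
    by_cases h2 : (i : ℕ) ≤ (j : ℕ) ∧ (j : ℕ) ≤ (i : ℕ) + m
    · rw [if_pos h2, if_pos (show n - 1 - (i : ℕ) ≤ t by omega)]
      congr 2
      omega
    · rw [if_neg h2]
      by_cases h3 : n - 1 - (i : ℕ) ≤ t
      · rw [if_pos h3, coeff_eq_zero_of_natDegree_lt (by omega), mul_zero]
      · rw [if_neg h3, mul_zero]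
  · rw [if_neg h1, if_neg h1, zero_mul, coeff_zero, zero_add,
      if_pos (show n ≤ (i : ℕ) by omega), coeff_C_mul_X_pow_mul]
    by_cases h2 : (i : ℕ) - n ≤ (j : ℕ) ∧ (j : ℕ) ≤ ((i : ℕ) - n) + n
    · rw [if_pos h2, if_pos (show m - 1 - ((i : ℕ) - n) ≤ t by omega)]
      congr 2
      omega
    · rw [if_neg h2]
      by_cases h3 : m - 1 - ((i : ℕ) - n) ≤ t
      · rw [if_pos h3, coeff_eq_zero_of_natDegree_lt (by omega), mul_zero]
      · rw [if_neg h3, mul_zero]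

lemma sylvester_det_eq_zero_iff (m n : ℕ) (hm1 : 1 ≤ m) (hn1 : 1 ≤ n)
    (f g : ℂ[X]) (hf : f.natDegree = m) (hg : g.natDegree = n)
    (hf0 : f ≠ 0) (hg0 : g ≠ 0) :
    (sylvesterMatrix m n f g).det = 0 ↔ ∃ z : ℂ, f.eval z = 0 ∧ g.eval z = 0 := by
  constructor
  · intro hdet
    obtain ⟨v, hv0, hv⟩ := Matrix.exists_vecMul_eq_zero_iff.mpr hdet
    by_contra hroot
    push_neg at hroot
    -- A f + B g = 0
    set A := vecPolyA m n v with hA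
    set B := vecPolyB m n v with hB
    have hsum : A * f + B * g = 0 := by
      ext k
      rw [coeff_zero]
      by_cases hk : k ≤ m + n - 1
      · have hk2 : m + n - 1 - k < n + m := by omega
        have := congrFun hv ⟨m + n - 1 - k, hk2⟩
        rw [vecMul_sylvester m n f g hf.le hg.le] at this
        simpa [show m + n - 1 - (m + n - 1 - k) = k by omega] using this
      · apply coeff_eq_zero_of_natDegree_lt
        apply lt_of_le_of_lt (natDegree_add_le _ _)
        have dA := (natDegree_mul_le (p := A) (q := f)).trans
          (add_le_add (vecPolyA_natDegree_le m n v) hf.le)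
        have dB := (natDegree_mul_le (p := B) (q := g)).trans
          (add_le_add (vecPolyB_natDegree_le m n v) hg.le)
        omega
    -- coprimality
    have hcop : IsCoprime f g := by
      classical
      rw [← EuclideanDomain.gcd_isUnit_iff]
      by_contra hu
      have hgcd0 : EuclideanDomain.gcd f g ≠ 0 := by
        intro h
        exact hf0 ((EuclideanDomain.gcd_eq_zero_iff).mp h).1
      have hdeg : (EuclideanDomain.gcd f g).degree ≠ 0 := by
        intro h
        exact hu (isUnit_iff_degree_eq_zero.mpr h)
      obtain ⟨z, hz⟩ := Complex.exists_root (by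
        rcases lt_or_eq_of_le (zero_le_degree_iff.mpr hgcd0) with h | h
        · exact h
        · exact absurd h.symm hdeg)
      exact hroot z (hz.dvd (EuclideanDomain.gcd_dvd_left f g))
        (hz.dvd (EuclideanDomain.gcd_dvd_right f g))
    have hBg : f ∣ B * g := ⟨-A, by linear_combination hsum⟩
    have hBd : f ∣ B := hcop.dvd_of_dvd_mul_right hBg
    have hB0 : B = 0 := by
      by_contra hB0
      have h1 : f.natDegree ≤ B.natDegree := natDegree_le_of_dvd hBd hB0
      have h2 : B.natDegree ≤ m - 1 := vecPolyB_natDegree_le m n v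
      omega
    have hA0 : A = 0 := by
      have : A * f = 0 := by rw [hB0, zero_mul, add_zero] at hsum; exact hsum
      rcases mul_eq_zero.mp this with h | h
      · exact h
      · exact absurd h hf0
    apply hv0
    funext i
    by_cases hi : (i : ℕ) < n
    · have := vecPolyA_coeff m n v i hi
      rw [← hA, hA0, coeff_zero] at this
      exact this.symm
    · have := vecPolyB_coeff m n v i (by omega)
      rw [← hB, hB0, coeff_zero] at this
      exact this.symm
  · rintro ⟨z, hfz, hgz⟩
    rw [← Matrix.exists_vecMul_eq_zero_iff]
    obtain ⟨qf, hqf⟩ := (dvd_iff_isRoot.mpr hfz)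
    obtain ⟨qg, hqg⟩ := (dvd_iff_isRoot.mpr hgz)
    have hqg0 : qg ≠ 0 := by
      intro h
      rw [h, mul_zero] at hqg
      exact hg0 hqg
    have hqgd : qg.natDegree = n - 1 := by
      have : g.natDegree = (X - C z).natDegree + qg.natDegree := by
        rw [hqg, natDegree_mul (X_sub_C_ne_zero z) hqg0]
      rw [natDegree_X_sub_C] at this
      omega
    have hqfd : qf.natDegree ≤ m - 1 := by
      by_cases hqf0 : qf = 0
      · simp [hqf0]
      · have : f.natDegree = (X - C z).natDegree + qf.natDegree := by
          rw [hqf, natDegree_mul (X_sub_C_ne_zero z) hqf0]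
        rw [natDegree_X_sub_C] at this
        omega
    set v : Fin (n + m) → ℂ := fun i =>
      if (i : ℕ) < n then qg.coeff (n - 1 - (i : ℕ)) else (-qf).coeff (m - 1 - ((i : ℕ) - n))
      with hv
    have hAv : vecPolyA m n v = qg := by
      ext k
      rcases le_or_gt k (n - 1) with hk | hk
      · have hk2 : n - 1 - k < n + m := by omega
        have h1 : (vecPolyA m n v).coeff (n - 1 - (n - 1 - k)) = v ⟨n - 1 - k, hk2⟩ :=
          vecPolyA_coeff m n v ⟨n - 1 - k, hk2⟩ (show n - 1 - k < n by omega)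
        rw [show n - 1 - (n - 1 - k) = k by omega] at h1
        have h2 : v ⟨n - 1 - k, hk2⟩ = qg.coeff k := by
          show (if n - 1 - k < n then qg.coeff (n - 1 - (n - 1 - k))
            else (-qf).coeff (m - 1 - (n - 1 - k - n))) = qg.coeff k
          rw [if_pos (show n - 1 - k < n by omega)]
          congr 1
          omega
        rw [h1, h2]
      · rw [coeff_eq_zero_of_natDegree_lt
            (by have := vecPolyA_natDegree_le m n v; omega),
          coeff_eq_zero_of_natDegree_lt (by omega)]
    have hBv : vecPolyB m n v = -qf := by
      ext k
      rcases le_or_gt k (m - 1) with hk | hk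
      · have hk2 : n + (m - 1 - k) < n + m := by omega
        have h1 : (vecPolyB m n v).coeff (m - 1 - (n + (m - 1 - k) - n))
            = v ⟨n + (m - 1 - k), hk2⟩ :=
          vecPolyB_coeff m n v ⟨n + (m - 1 - k), hk2⟩ (show n ≤ n + (m - 1 - k) by omega)
        rw [show m - 1 - (n + (m - 1 - k) - n) = k by omega] at h1
        have h2 : v ⟨n + (m - 1 - k), hk2⟩ = (-qf).coeff k := by
          show (if n + (m - 1 - k) < n then qg.coeff (n - 1 - (n + (m - 1 - k)))
            else (-qf).coeff (m - 1 - (n + (m - 1 - k) - n))) = (-qf).coeff k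
          rw [if_neg (by omega)]
          congr 1
          omega
        rw [h1, h2]
      · rw [coeff_eq_zero_of_natDegree_lt
            (by have := vecPolyB_natDegree_le m n v; omega),
          coeff_eq_zero_of_natDegree_lt (by rw [natDegree_neg]; omega)]
    refine ⟨v, ?_, ?_⟩
    · intro h
      have h0 : v ⟨0, by omega⟩ = 0 := congrFun h _
      have h0' : qg.coeff (n - 1) = 0 := by
        rw [← h0]
        show qg.coeff (n - 1)
          = if 0 < n then qg.coeff (n - 1 - 0) else (-qf).coeff (m - 1 - (0 - n))
        rw [if_pos (by omega)]
        norm_num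
      have hlc : qg.leadingCoeff = 0 := by rw [leadingCoeff, hqgd]; exact h0'
      exact leadingCoeff_ne_zero.mpr hqg0 hlc
    · funext j
      rw [vecMul_sylvester m n f g hf.le hg.le, hAv, hBv]
      have hz0 : qg * f + -qf * g = 0 := by
        rw [hqf, hqg]
        ring
      rw [hz0, coeff_zero]
      simp
lemma det_natDegree_le_and_coeff {N : ℕ} (M : Matrix (Fin N) (Fin N) (Polynomial ℂ))
    (h : ∀ i j, (M i j).natDegree ≤ 1) :
    M.det.natDegree ≤ N ∧
      M.det.coeff N = (Matrix.of fun i j => (M i j).coeff 1).det := by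
  rw [Matrix.det_apply', Matrix.det_apply']
  constructor
  · apply natDegree_sum_le_of_forall_le
    intro σ _
    refine (natDegree_mul_le).trans ?_
    have h1 : (((Equiv.Perm.sign σ : ℤ) : ℂ[X])).natDegree = 0 := natDegree_intCast _
    have h2 : (∏ i, M (σ i) i).natDegree ≤ N := by
      refine (natDegree_prod_le _ _).trans ?_
      calc ∑ i, (M (σ i) i).natDegree ≤ ∑ _i : Fin N, 1 :=
            Finset.sum_le_sum (fun i _ => h _ _)
        _ = N := by simp
    omega
  · rw [finset_sum_coeff]
    apply Finset.sum_congr rfl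
    intro σ _
    rw [coeff_intCast_mul]
    congr 1
    have := coeff_prod_of_natDegree_le (s := Finset.univ)
      (fun i => M (σ i) i) 1 (fun i _ => h _ _)
    simpa using this

/-- For a monic `P` of degree `d ≥ 3`, regard the polar
derivative `D_P(z,u) = d·P(z) + (u − z)·P′(z)` and its `z`-derivative
`∂_zD_P(z,u) = (d−1)·P′(z) + (u − z)·P″(z)` as polynomials in `z` over `ℂ[u]`;
their `z`-degrees are `d − 1` and `d − 2`. Their resultant `R(u)` with respect
to `z` has degree at most `2d − 3` in `u`, its coefficient of `u^{2d−3}` is the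
resultant of `P′` and `P″`, this coefficient vanishes iff `P′` has a multiple
root, and consequently the isodynamic polynomial `ID_d(P)` (the discriminant,
i.e. `R` divided by the leading `z`-coefficient of `D_P`, up to sign) has
degree less than `2d − 4` iff `P′` has a multiple zero. -/
theorem resultant_of_polar_derivative_leading_coefficient
    (d : ℕ) (hd : 3 ≤ d) (P : ℂ[X]) (hm : P.Monic) (hdeg : P.natDegree = d) :
    ∀ Pm DP SDP : Polynomial (Polynomial ℂ), ∀ Res : Polynomial ℂ,
      Pm = P.map Polynomial.C →
      DP = Polynomial.C (Polynomial.C (d : ℂ)) * Pm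
            + (Polynomial.C Polynomial.X - Polynomial.X) * derivative Pm →
      SDP = Polynomial.C (Polynomial.C ((d : ℂ) - 1)) * derivative Pm
            + (Polynomial.C Polynomial.X - Polynomial.X) * derivative (derivative Pm) →
      Res = resultant (d - 1) (d - 2) DP SDP →
      DP.natDegree = d - 1 ∧
      SDP.natDegree = d - 2 ∧
      Res.natDegree ≤ 2 * d - 3 ∧
      Res.coeff (2 * d - 3)
        = resultant (d - 1) (d - 2) (derivative P) (derivative (derivative P)) ∧
      (Res.coeff (2 * d - 3) = 0 ↔
        ∃ z : ℂ, (derivative P).eval z = 0 ∧ (derivative (derivative P)).eval z = 0) ∧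
      (∀ ID : Polynomial ℂ, Res = DP.leadingCoeff * ID →
        (ID.natDegree < 2 * d - 4 ↔
          ∃ z : ℂ, (derivative P).eval z = 0 ∧ (derivative (derivative P)).eval z = 0)) := by
  intro Pm DP SDP Res hPm hDP hSDP hRes
  set Q := derivative P with hQ
  set Q2 := derivative Q with hQ2
  have hd0 : (d : ℂ) ≠ 0 := Nat.cast_ne_zero.mpr (by omega)
  have hc1 : ((d - 1 : ℕ) : ℂ) = (d : ℂ) - 1 := by
    push_cast [Nat.cast_sub (show 1 ≤ d by omega)]; ring
  have hQle : Q.natDegree ≤ d - 1 := by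
    have := natDegree_derivative_le P; rw [hdeg] at this; exact this
  have hPd : P.coeff d = 1 := by rw [← hdeg]; exact hm.coeff_natDegree
  have hQtop : Q.coeff (d - 1) = (d : ℂ) := by
    rw [hQ, coeff_derivative, show d - 1 + 1 = d by omega, hPd, one_mul, hc1]; ring
  have hQdD : Q.natDegree = d - 1 :=
    le_antisymm hQle (le_natDegree_of_ne_zero (by rw [hQtop]; exact hd0))
  have hQ2le : Q2.natDegree ≤ d - 2 := by
    have := natDegree_derivative_le Q; rw [hQdD] at this
    exact this.trans (by omega)
  have hQ2top : Q2.coeff (d - 2) = (d : ℂ) * ((d : ℂ) - 1) := by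
    rw [hQ2, coeff_derivative, show d - 2 + 1 = d - 1 by omega, hQtop]
    have : ((d - 2 : ℕ) : ℂ) = (d : ℂ) - 2 := by
      push_cast [Nat.cast_sub (show 2 ≤ d by omega)]; ring
    rw [this]; ring
  have hd1 : (d : ℂ) - 1 ≠ 0 := by
    intro h
    have : (d : ℂ) = 1 := by linear_combination h
    have : d = 1 := by exact_mod_cast this
    omega
  have hQ2topne : Q2.coeff (d - 2) ≠ 0 := by rw [hQ2top]; exact mul_ne_zero hd0 hd1
  have hQ2d : Q2.natDegree = d - 2 :=
    le_antisymm hQ2le (le_natDegree_of_ne_zero hQ2topne)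
  have hQne : Q ≠ 0 := fun h => hd0 (by rw [← hQtop, h, coeff_zero])
  have hQ2ne : Q2 ≠ 0 := fun h => hQ2topne (by rw [h, coeff_zero])
  have hPmd : derivative Pm = Q.map C := by rw [hPm, derivative_map, hQ]
  have hPmd2 : derivative (derivative Pm) = Q2.map C := by rw [hPmd, derivative_map, hQ2]
  -- coefficient formulas
  have hDPc : ∀ k, DP.coeff k = C (((d : ℂ) - k) * P.coeff k) + C (Q.coeff k) * X := by
    intro k
    rw [hDP, coeff_add, coeff_C_mul, sub_mul, coeff_sub, coeff_C_mul, hPmd, coeff_map,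
      hPm, coeff_map]
    cases k with
    | zero =>
      rw [mul_coeff_zero, coeff_X_zero, zero_mul]
      simp only [Nat.cast_zero, sub_zero, C_mul, map_natCast]
      ring
    | succ k =>
      rw [coeff_X_mul, coeff_map]
      have hq : Q.coeff k = P.coeff (k + 1) * ((k : ℂ) + 1) := by
        rw [hQ, coeff_derivative]
      rw [hq]
      simp only [C_mul, C_sub, C_add, C_1, Nat.cast_add, Nat.cast_one, map_natCast]
      ring
  have hSDPc : ∀ k, SDP.coeff k = C (((d : ℂ) - 1 - k) * Q.coeff k) + C (Q2.coeff k) * X := by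
    intro k
    rw [hSDP, coeff_add, coeff_C_mul, sub_mul, coeff_sub, coeff_C_mul, hPmd2, coeff_map,
      hPmd, coeff_map]
    cases k with
    | zero =>
      rw [mul_coeff_zero, coeff_X_zero, zero_mul]
      simp only [Nat.cast_zero, sub_zero, C_mul, C_sub, C_1, map_natCast]
      ring
    | succ k =>
      rw [coeff_X_mul, coeff_map]
      have hq : Q2.coeff k = Q.coeff (k + 1) * ((k : ℂ) + 1) := by
        rw [hQ2, coeff_derivative]
      rw [hq]
      simp only [C_mul, C_sub, C_add, C_1, Nat.cast_add, Nat.cast_one, map_natCast]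
      ring
  have hDPcoeff1 : ∀ k, (DP.coeff k).coeff 1 = Q.coeff k := by
    intro k
    rw [hDPc k, coeff_add, coeff_C, if_neg one_ne_zero, zero_add, coeff_C_mul,
      coeff_X_one, mul_one]
  have hSDPcoeff1 : ∀ k, (SDP.coeff k).coeff 1 = Q2.coeff k := by
    intro k
    rw [hSDPc k, coeff_add, coeff_C, if_neg one_ne_zero, zero_add, coeff_C_mul,
      coeff_X_one, mul_one]
  -- degrees
  have hDPd : DP.natDegree = d - 1 := by
    apply le_antisymm
    · rw [natDegree_le_iff_coeff_eq_zero]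
      intro N hN
      rw [hDPc N]
      have hQN : Q.coeff N = 0 := coeff_eq_zero_of_natDegree_lt (by omega)
      rw [hQN]
      rcases eq_or_lt_of_le (show d ≤ N by omega) with h | h
      · rw [← h, sub_self, zero_mul]
        simp
      · have hPN : P.coeff N = 0 := coeff_eq_zero_of_natDegree_lt (by omega)
        rw [hPN, mul_zero]
        simp
    · apply le_natDegree_of_ne_zero (n := d - 1)
      intro h
      have h2 := hDPcoeff1 (d - 1)
      rw [h, coeff_zero, hQtop] at h2
      exact hd0 h2.symm
  have hSDPd : SDP.natDegree = d - 2 := by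
    apply le_antisymm
    · rw [natDegree_le_iff_coeff_eq_zero]
      intro N hN
      rw [hSDPc N]
      have hQ2N : Q2.coeff N = 0 := coeff_eq_zero_of_natDegree_lt (by omega)
      rw [hQ2N]
      rcases eq_or_lt_of_le (show d - 1 ≤ N by omega) with h | h
      · rw [← h, hc1, sub_self, zero_mul]
        simp
      · have hQN : Q.coeff N = 0 := coeff_eq_zero_of_natDegree_lt (by omega)
        rw [hQN, mul_zero]
        simp
    · apply le_natDegree_of_ne_zero (n := d - 2)
      intro h
      have h2 := hSDPcoeff1 (d - 2)
      rw [h, coeff_zero, hQ2top] at h2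
      exact (mul_ne_zero hd0 hd1) h2.symm
  -- matrix entries
  have hentry_deg : ∀ i j, ((sylvesterMatrix (d - 1) (d - 2) DP SDP) i j).natDegree ≤ 1 := by
    intro i j
    have hdp : ∀ k, (DP.coeff k).natDegree ≤ 1 := by
      intro k
      rw [hDPc k]
      refine (natDegree_add_le _ _).trans ?_
      simp only [natDegree_C, max_le_iff]
      exact ⟨by omega, (natDegree_C_mul_le _ _).trans (by rw [natDegree_X])⟩
    have hsdp : ∀ k, (SDP.coeff k).natDegree ≤ 1 := by
      intro k
      rw [hSDPc k]
      refine (natDegree_add_le _ _).trans ?_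
      simp only [natDegree_C, max_le_iff]
      exact ⟨by omega, (natDegree_C_mul_le _ _).trans (by rw [natDegree_X])⟩
    rw [sylvesterMatrix]
    simp only [Matrix.of_apply]
    split_ifs <;> first | exact hdp _ | exact hsdp _ | simp
  have hentry1 : ∀ i j, ((sylvesterMatrix (d - 1) (d - 2) DP SDP) i j).coeff 1
      = sylvesterMatrix (d - 1) (d - 2) Q Q2 i j := by
    intro i j
    rw [sylvesterMatrix, sylvesterMatrix]
    simp only [Matrix.of_apply]
    split_ifs <;> simp [hDPcoeff1, hSDPcoeff1]
  obtain ⟨hdet_le, hdet_coeff⟩ :=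
    det_natDegree_le_and_coeff (sylvesterMatrix (d - 1) (d - 2) DP SDP) hentry_deg
  have hN : d - 2 + (d - 1) = 2 * d - 3 := by omega
  have hRes1 : Res.natDegree ≤ 2 * d - 3 := by
    rw [hRes]
    unfold _root_.resultant
    exact hdet_le.trans (by omega)
  have hRescoeff : Res.coeff (2 * d - 3) = resultant (d - 1) (d - 2) Q Q2 := by
    rw [hRes]
    unfold _root_.resultant
    rw [← hN, hdet_coeff]
    congr 1
    funext i j
    exact hentry1 i j
  have hiff : resultant (d - 1) (d - 2) Q Q2 = 0 ↔
      ∃ z : ℂ, Q.eval z = 0 ∧ Q2.eval z = 0 := by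
    unfold _root_.resultant
    exact sylvester_det_eq_zero_iff (d - 1) (d - 2) (by omega) (by omega) Q Q2 hQdD hQ2d hQne hQ2ne
  refine ⟨hDPd, hSDPd, hRes1, hRescoeff, by rw [hRescoeff]; exact hiff, ?_⟩
  intro ID hID
  have hlead : DP.leadingCoeff = C (P.coeff (d - 1)) + C (d : ℂ) * X := by
    rw [leadingCoeff, hDPd, hDPc, hQtop, hc1]
    congr 2
    ring
  have hlead_deg : DP.leadingCoeff.natDegree = 1 := by
    rw [hlead, add_comm]
    exact natDegree_linear hd0
  have hleadne : DP.leadingCoeff ≠ 0 := by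
    intro h
    rw [h, natDegree_zero] at hlead_deg
    omega
  rw [← hiff, ← hRescoeff]
  by_cases hID0 : ID = 0
  · rw [hID0, mul_zero] at hID
    rw [hID, hID0]
    simp
    omega
  · have hResne : Res ≠ 0 := by rw [hID]; exact mul_ne_zero hleadne hID0
    have hmulDeg : Res.natDegree = 1 + ID.natDegree := by
      rw [hID, natDegree_mul hleadne hID0, hlead_deg]
    constructor
    · intro hlt
      apply coeff_eq_zero_of_natDegree_lt
      omega
    · intro h0
      by_contra hge
      push_neg at hge
      have hEq : Res.natDegree = 2 * d - 3 := by omega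
      have := leadingCoeff_ne_zero.mpr hResne
      rw [leadingCoeff, hEq, h0] at this
      exact this rfl
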